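/- Let Ω ⊆ EuclideanSpace ℝ (Fin 3) be a compact set and ρ : EuclideanSpace ℝ (Fin 3) → ℝ a bounded measurable function vanishing outside Ω. Define the Newton potential N_ρ(x) = −(1/4π) ∫_Ω ρ(y)/‖x−y‖ dy. Then for every x ∉ Ω, N_ρ is twice differentiable at x and harmonic there: ΔN_ρ(x) = 0. -/

import Mathlib

open MeasureTheory BigOperators Real
open scoped RealInnerProductSpace

set_option maxHeartbeats 1000000

noncomputable section NewtonAux

abbrev E3 := EuclideanSpace ℝ (Fin 3)

instance instNACGE3E3 : NormedAddCommGroup (E3 →L[ℝ] E3 →L[ℝ] ℝ) :=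
  ContinuousLinearMap.toNormedAddCommGroup

def nq (z : E3) : ℝ := @inner ℝ _ _ z z

def nB : E3 →L[ℝ] E3 →L[ℝ] ℝ := innerSL ℝ

def nK0 (z : E3) : ℝ := nq z ^ (-2⁻¹ : ℝ)

def nK1 (z : E3) : E3 →L[ℝ] ℝ := (-(nq z ^ (-(3:ℝ)/2))) • nB z

def nK2 (z : E3) : E3 →L[ℝ] E3 →L[ℝ] ℝ :=
  (-(nq z ^ (-(3:ℝ)/2))) • nB + ((3 * nq z ^ (-(5:ℝ)/2)) • nB z).smulRight (nB z)

lemma nq_eq (z : E3) : nq z = ‖z‖ ^ 2 := real_inner_self_eq_norm_sq z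

lemma nq_pos {z : E3} (hz : z ≠ 0) : 0 < nq z := by
  rw [nq_eq]
  exact pow_pos (norm_pos_iff.mpr hz) 2

lemma nq_rpow (z : E3) (p : ℝ) : nq z ^ p = ‖z‖ ^ (2 * p) := by
  rw [nq_eq, ← Real.rpow_natCast ‖z‖ 2, ← Real.rpow_mul (norm_nonneg z)]
  norm_num

lemma nK0_eq (z : E3) : nK0 z = ‖z‖⁻¹ := by
  rcases eq_or_ne z 0 with rfl | hz
  · simp [nK0, nq, Real.zero_rpow (by norm_num : (-2⁻¹ : ℝ) ≠ 0)]
  · rw [nK0, nq_rpow]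
    norm_num [Real.rpow_neg_one]

lemma hasFDerivAt_nq (z : E3) : HasFDerivAt nq ((2:ℝ) • nB z) z := by
  have h := (hasFDerivAt_id z).inner ℝ (hasFDerivAt_id z)
  refine h.congr_fderiv (Eq.symm ?_)
  ext h'
  simp only [nB, ContinuousLinearMap.comp_apply, ContinuousLinearMap.prod_apply,
    fderivInnerCLM_apply, ContinuousLinearMap.smul_apply, smul_eq_mul,
    ContinuousLinearMap.coe_id', id_eq, innerSL_apply_apply]
  rw [innerSL_apply_apply, real_inner_comm z h']
  ring

lemma hasFDerivAt_nq_rpow {z : E3} (hz : z ≠ 0) (p : ℝ) :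
    HasFDerivAt (fun z => nq z ^ p) ((2 * p * nq z ^ (p - 1)) • nB z) z := by
  have h := (Real.hasDerivAt_rpow_const (x := nq z) (p := p)
    (Or.inl (nq_pos hz).ne')).comp_hasFDerivAt z (hasFDerivAt_nq z)
  refine h.congr_fderiv (Eq.symm ?_)
  rw [smul_smul]
  ring_nf

lemma hasFDerivAt_nK0 {z : E3} (hz : z ≠ 0) : HasFDerivAt nK0 (nK1 z) z := by
  have h := hasFDerivAt_nq_rpow hz (-2⁻¹)
  refine h.congr_fderiv (Eq.symm ?_)
  simp only [nK1]
  rw [show (-2⁻¹ - 1 : ℝ) = -(3:ℝ)/2 by norm_num]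
  congr 1
  ring

lemma hasFDerivAt_nK1 {z : E3} (hz : z ≠ 0) : HasFDerivAt nK1 (nK2 z) z := by
  have hc : HasFDerivAt (fun z => -(nq z ^ (-(3:ℝ)/2)))
      ((3 * nq z ^ (-(5:ℝ)/2)) • nB z) z := by
    have h := (hasFDerivAt_nq_rpow hz (-(3:ℝ)/2)).neg
    refine h.congr_fderiv (Eq.symm ?_)
    rw [show (-(3:ℝ)/2 - 1 : ℝ) = -(5:ℝ)/2 by norm_num, ← neg_smul]
    congr 1
    ring
  exact hc.smul nB.hasFDerivAt


lemma norm_nB_le : ‖nB‖ ≤ 1 := norm_innerSL_le ℝ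

lemma norm_nB_apply (z : E3) : ‖nB z‖ = ‖z‖ := innerSL_apply_norm ℝ z

lemma norm_nK1_le {δ : ℝ} {z : E3} (hδ : 0 < δ) (hz : δ ≤ ‖z‖) :
    ‖nK1 z‖ ≤ δ ^ (-2:ℝ) := by
  have hzpos : (0:ℝ) < ‖z‖ := lt_of_lt_of_le hδ hz
  have hz0 : z ≠ 0 := norm_pos_iff.mp hzpos
  have h1 : ‖nK1 z‖ ≤ ‖(-(nq z ^ (-(3:ℝ)/2)) : ℝ)‖ * ‖nB z‖ :=
    ContinuousLinearMap.opNorm_smul_le (-(nq z ^ (-(3:ℝ)/2)) : ℝ) (nB z)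
  have h2 : ‖(-(nq z ^ (-(3:ℝ)/2)) : ℝ)‖ * ‖nB z‖ = ‖z‖ ^ (-2:ℝ) := by
    rw [Real.norm_eq_abs, abs_neg, abs_of_pos (Real.rpow_pos_of_pos (nq_pos hz0) _),
      norm_nB_apply, nq_rpow]
    rw [show (2 * (-(3:ℝ)/2)) = (-3:ℝ) by norm_num,
      show (-2:ℝ) = -3 + 1 by norm_num, Real.rpow_add hzpos, Real.rpow_one]
  rw [h2] at h1
  exact h1.trans (Real.rpow_le_rpow_of_nonpos hδ hz (by norm_num))

lemma norm_nK2_le {δ : ℝ} {z : E3} (hδ : 0 < δ) (hz : δ ≤ ‖z‖) :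
    ‖nK2 z‖ ≤ 4 * δ ^ (-3:ℝ) := by
  have hzpos : (0:ℝ) < ‖z‖ := lt_of_lt_of_le hδ hz
  have hz0 : z ≠ 0 := norm_pos_iff.mp hzpos
  have hd : δ ^ (-3:ℝ) > 0 := Real.rpow_pos_of_pos hδ _
  have hmono : ‖z‖ ^ (-3:ℝ) ≤ δ ^ (-3:ℝ) :=
    Real.rpow_le_rpow_of_nonpos hδ hz (by norm_num)
  have h3 : nq z ^ (-(3:ℝ)/2) = ‖z‖ ^ (-3:ℝ) := by
    rw [nq_rpow]; norm_num
  have h4 : nq z ^ (-(5:ℝ)/2) * ‖z‖ * ‖z‖ = ‖z‖ ^ (-3:ℝ) := by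
    rw [nq_rpow, show (2 * (-(5:ℝ)/2)) = (-5:ℝ) by norm_num]
    rw [show (-3:ℝ) = -5 + 1 + 1 by norm_num, Real.rpow_add hzpos, Real.rpow_add hzpos,
      Real.rpow_one]
  have h1 : ‖(-(nq z ^ (-(3:ℝ)/2))) • nB‖ ≤ ‖z‖ ^ (-3:ℝ) := by
    refine (ContinuousLinearMap.opNorm_smul_le (-(nq z ^ (-(3:ℝ)/2)) : ℝ) nB).trans ?_
    rw [Real.norm_eq_abs, abs_neg, abs_of_pos (Real.rpow_pos_of_pos (nq_pos hz0) _), h3]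
    calc ‖z‖ ^ (-3:ℝ) * ‖nB‖ ≤ ‖z‖ ^ (-3:ℝ) * 1 :=
          mul_le_mul_of_nonneg_left norm_nB_le (Real.rpow_nonneg (norm_nonneg z) _)
      _ = ‖z‖ ^ (-3:ℝ) := mul_one _
  have h2 : ‖((3 * nq z ^ (-(5:ℝ)/2)) • nB z).smulRight (nB z)‖ ≤ 3 * ‖z‖ ^ (-3:ℝ) := by
    rw [ContinuousLinearMap.norm_smulRight_apply]
    have hb : ‖(3 * nq z ^ (-(5:ℝ)/2)) • nB z‖ ≤ ‖(3 * nq z ^ (-(5:ℝ)/2) : ℝ)‖ * ‖nB z‖ :=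
      ContinuousLinearMap.opNorm_smul_le (3 * nq z ^ (-(5:ℝ)/2) : ℝ) (nB z)
    have hpos : (0:ℝ) < 3 * nq z ^ (-(5:ℝ)/2) :=
      mul_pos (by norm_num) (Real.rpow_pos_of_pos (nq_pos hz0) _)
    rw [Real.norm_eq_abs, abs_of_pos hpos, norm_nB_apply] at hb
    calc ‖(3 * nq z ^ (-(5:ℝ)/2)) • nB z‖ * ‖nB z‖
        ≤ (3 * nq z ^ (-(5:ℝ)/2) * ‖z‖) * ‖nB z‖ :=
          mul_le_mul_of_nonneg_right hb (norm_nonneg _)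
      _ = 3 * (nq z ^ (-(5:ℝ)/2) * ‖z‖ * ‖z‖) := by rw [norm_nB_apply]; ring
      _ = 3 * ‖z‖ ^ (-3:ℝ) := by rw [h4]
  have e : ‖nK2 z‖ = ‖(-(nq z ^ (-(3:ℝ)/2))) • nB
      + ((3 * nq z ^ (-(5:ℝ)/2)) • nB z).smulRight (nB z)‖ := rfl
  rw [e]
  calc ‖(-(nq z ^ (-(3:ℝ)/2))) • nB + ((3 * nq z ^ (-(5:ℝ)/2)) • nB z).smulRight (nB z)‖
      ≤ ‖(-(nq z ^ (-(3:ℝ)/2))) • nB‖ +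
        ‖((3 * nq z ^ (-(5:ℝ)/2)) • nB z).smulRight (nB z)‖ :=
        ContinuousLinearMap.opNorm_add_le _ _
    _ ≤ ‖z‖ ^ (-3:ℝ) + 3 * ‖z‖ ^ (-3:ℝ) := add_le_add h1 h2
    _ = 4 * ‖z‖ ^ (-3:ℝ) := by ring
    _ ≤ 4 * δ ^ (-3:ℝ) := by linarith

lemma nq_sum (z : E3) : ∑ i : Fin 3, z i * z i = nq z := by
  simp [nq, PiLp.inner_apply, RCLike.inner_apply, conj_trivial]
  rw [EuclideanSpace.norm_eq, Real.sq_sqrt (by positivity)]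
  simp [sq]

lemma nK2_trace {z : E3} (hz : z ≠ 0) :
    ∑ i : Fin 3, nK2 z (EuclideanSpace.single i (1:ℝ)) (EuclideanSpace.single i (1:ℝ)) = 0 := by
  have hq := nq_pos hz
  have key : ∀ i : Fin 3, nK2 z (EuclideanSpace.single i (1:ℝ)) (EuclideanSpace.single i (1:ℝ))
      = -(nq z ^ (-(3:ℝ)/2)) + 3 * nq z ^ (-(5:ℝ)/2) * (z i * z i) := by
    intro i
    have hii : (nB (EuclideanSpace.single i (1:ℝ))) (EuclideanSpace.single i (1:ℝ)) = (1:ℝ) := by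
      show @inner ℝ _ _ (EuclideanSpace.single i (1:ℝ)) (EuclideanSpace.single i (1:ℝ)) = (1:ℝ)
      rw [EuclideanSpace.inner_single_left]
      simp [EuclideanSpace.single_apply]
    have hzi : (nB z) (EuclideanSpace.single i (1:ℝ)) = z i := by
      show @inner ℝ _ _ z (EuclideanSpace.single i (1:ℝ)) = z i
      rw [EuclideanSpace.inner_single_right]
      simp
    simp only [nK2, ContinuousLinearMap.add_apply, ContinuousLinearMap.smul_apply,
      ContinuousLinearMap.smulRight_apply, hii, hzi, smul_eq_mul]
    ring
  rw [Finset.sum_congr rfl (fun i _ => key i), Finset.sum_add_distrib, Finset.sum_const]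
  rw [← Finset.mul_sum, nq_sum]
  have h5 : nq z ^ (-(5:ℝ)/2) * nq z = nq z ^ (-(3:ℝ)/2) := by
    calc nq z ^ (-(5:ℝ)/2) * nq z = nq z ^ (-(5:ℝ)/2) * nq z ^ (1:ℝ) := by rw [Real.rpow_one]
      _ = nq z ^ (-(5:ℝ)/2 + 1) := (Real.rpow_add hq _ _).symm
      _ = nq z ^ (-(3:ℝ)/2) := by norm_num
  simp only [Finset.card_univ, Fintype.card_fin, nsmul_eq_mul, mul_assoc, h5]
  push_cast
  ring

lemma continuous_nq : Continuous nq := by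
  have : nq = fun z : E3 => ‖z‖ ^ 2 := funext nq_eq
  rw [this]; exact continuous_norm.pow 2

lemma continuousAt_nK2 {z : E3} (hz : z ≠ 0) : ContinuousAt nK2 z := by
  have h32 : ContinuousAt (fun z : E3 => nq z ^ (-(3:ℝ)/2)) z :=
    (Real.continuousAt_rpow_const _ _ (Or.inl (nq_pos hz).ne')).comp continuous_nq.continuousAt
  have h52 : ContinuousAt (fun z : E3 => nq z ^ (-(5:ℝ)/2)) z :=
    (Real.continuousAt_rpow_const _ _ (Or.inl (nq_pos hz).ne')).comp continuous_nq.continuousAt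
  have hBc : ContinuousAt (fun z : E3 => nB z) z := nB.continuous.continuousAt
  have h1 : ContinuousAt (fun z : E3 => (-(nq z ^ (-(3:ℝ)/2))) • nB) z :=
    h32.neg.smul continuousAt_const
  have hc : ContinuousAt (fun z : E3 => (3 * nq z ^ (-(5:ℝ)/2)) • nB z) z :=
    (continuousAt_const.mul h52).smul hBc
  have h2 : ContinuousAt
      (fun z : E3 => ((3 * nq z ^ (-(5:ℝ)/2)) • nB z).smulRight (nB z)) z := by
    have hL : Continuous (fun p : (E3 →L[ℝ] ℝ) × (E3 →L[ℝ] ℝ) =>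
        (ContinuousLinearMap.smulRightL ℝ E3 (E3 →L[ℝ] ℝ)) p.1 p.2) :=
      (ContinuousLinearMap.smulRightL ℝ E3 (E3 →L[ℝ] ℝ)).continuous₂
    exact ContinuousAt.comp hL.continuousAt (hc.prodMk hBc)
  exact h1.add h2

end NewtonAux

/-- The Laplacian of `f : ℝ³ → ℝ` at `x`, as the sum of second partial derivatives
along the standard coordinate directions. -/
noncomputable def lap (f : EuclideanSpace ℝ (Fin 3) → ℝ) (x : EuclideanSpace ℝ (Fin 3)) : ℝ :=
  ∑ i : Fin 3,
    fderiv ℝ (fun y => fderiv ℝ f y (EuclideanSpace.single i (1 : ℝ))) x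
      (EuclideanSpace.single i (1 : ℝ))

lemma integrable_of_bound {G : Type*} [NormedAddCommGroup G] {Ω : Set E3} (hΩm : MeasurableSet Ω)
    (hfin : MeasureTheory.volume Ω < ⊤) {f : E3 → G}
    (hm : AEStronglyMeasurable f (MeasureTheory.volume.restrict Ω))
    (C : ℝ) (hb : ∀ y ∈ Ω, ‖f y‖ ≤ C) : Integrable f (MeasureTheory.volume.restrict Ω) := by
  refine Integrable.mono' (g := fun _ => C) ?_ hm ?_
  · exact integrableOn_const hfin.ne
  · exact (ae_restrict_iff' hΩm).mpr (Filter.Eventually.of_forall hb)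

theorem newton_potential_harmonic_outside
    (Ω : Set (EuclideanSpace ℝ (Fin 3))) (hΩ : IsCompact Ω)
    (ρ : EuclideanSpace ℝ (Fin 3) → ℝ) (hρ : Measurable ρ)
    (M : ℝ) (hρbd : ∀ y, |ρ y| ≤ M)
    (hρ0 : ∀ y ∉ Ω, ρ y = 0)
    (N : EuclideanSpace ℝ (Fin 3) → ℝ)
    (hN : N = fun x => -(1 / (4 * π)) * ∫ y in Ω, ρ y / ‖x - y‖)
    (x : EuclideanSpace ℝ (Fin 3)) (hx : x ∉ Ω) :
    ContDiffAt ℝ 2 N x ∧ lap N x = 0 := by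
  have hΩm : MeasurableSet Ω := hΩ.isClosed.measurableSet
  have hfin : MeasureTheory.volume Ω < ⊤ := hΩ.measure_lt_top
  have hM0 : 0 ≤ M := le_trans (abs_nonneg _) (hρbd 0)
  obtain ⟨ε, hε, hball⟩ : ∃ ε > 0, Metric.ball x ε ⊆ Ωᶜ :=
    Metric.isOpen_iff.mp hΩ.isClosed.isOpen_compl x hx
  set δ : ℝ := ε / 4 with hδdef
  have hδ : 0 < δ := by positivity
  have h2δ : 0 < 2 * δ := by positivity
  have hdist : ∀ x' ∈ Metric.ball x (2*δ), ∀ y ∈ Ω, 2*δ ≤ ‖x' - y‖ := by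
    intro x' hx' y hy
    by_contra hcon
    push_neg at hcon
    refine hball ?_ hy
    have h1 : dist x' x < 2*δ := Metric.mem_ball.mp hx'
    have h2 : dist y x' < 2*δ := by
      rw [dist_comm, dist_eq_norm]; exact hcon
    refine Metric.mem_ball.mpr ?_
    calc dist y x ≤ dist y x' + dist x' x := dist_triangle _ _ _
      _ < 2*δ + 2*δ := add_lt_add h2 h1
      _ = ε := by rw [hδdef]; ring
  have hne : ∀ x' ∈ Metric.ball x (2*δ), ∀ y ∈ Ω, x' - y ≠ 0 := by
    intro x' hx' y hy h0
    have h := hdist x' hx' y hy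
    rw [h0, norm_zero] at h
    linarith
  have hxball : x ∈ Metric.ball x (2*δ) := Metric.mem_ball_self h2δ
  have hsubball : ∀ x' ∈ Metric.ball x δ, Metric.ball x' δ ⊆ Metric.ball x (2*δ) := by
    intro x' hx' w hw
    have h1 : dist x' x < δ := Metric.mem_ball.mp hx'
    have h2 : dist w x' < δ := Metric.mem_ball.mp hw
    refine Metric.mem_ball.mpr ?_
    calc dist w x ≤ dist w x' + dist x' x := dist_triangle _ _ _
      _ < δ + δ := add_lt_add h2 h1
      _ = 2*δ := by ring
  have hballsub : Metric.ball x δ ⊆ Metric.ball x (2*δ) :=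
    Metric.ball_subset_ball (by linarith)
  -- measurability
  have meas_nq : ∀ x' : E3, Measurable fun y : E3 => nq (x' - y) := fun x' =>
    (continuous_nq.comp (continuous_const.sub continuous_id)).measurable
  have measB : ∀ x' : E3, Continuous fun y : E3 => nB (x' - y) := fun x' =>
    nB.continuous.comp (continuous_const.sub continuous_id)
  have meas0 : ∀ x' : E3, AEStronglyMeasurable (fun y => ρ y * nK0 (x' - y))
      (MeasureTheory.volume.restrict Ω) := by
    intro x'
    have h1 : Measurable fun y : E3 => nq (x' - y) := meas_nq x'
    have h2 : Measurable fun y : E3 => nK0 (x' - y) := by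
      simp only [nK0]; fun_prop
    exact (hρ.mul h2).aestronglyMeasurable
  have meas1 : ∀ x' : E3, AEStronglyMeasurable (fun y => ρ y • nK1 (x' - y))
      (MeasureTheory.volume.restrict Ω) := by
    intro x'
    have h1 : Measurable fun y : E3 => nq (x' - y) := meas_nq x'
    have hs : Measurable fun y : E3 => -(nq (x' - y) ^ (-(3:ℝ)/2)) := by fun_prop
    have h2 : AEStronglyMeasurable (fun y : E3 => nK1 (x' - y))
        (MeasureTheory.volume.restrict Ω) := by
      simp only [nK1]
      exact hs.aestronglyMeasurable.smul (measB x').aestronglyMeasurable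
    exact hρ.aestronglyMeasurable.smul h2
  have meas2 : ∀ x' : E3, AEStronglyMeasurable (fun y => ρ y • nK2 (x' - y))
      (MeasureTheory.volume.restrict Ω) := by
    intro x'
    have h1 : Measurable fun y : E3 => nq (x' - y) := meas_nq x'
    have hs3 : Measurable fun y : E3 => -(nq (x' - y) ^ (-(3:ℝ)/2)) := by fun_prop
    have hs5 : Measurable fun y : E3 => 3 * nq (x' - y) ^ (-(5:ℝ)/2) := by fun_prop
    have ht1 : AEStronglyMeasurable (fun y : E3 => (-(nq (x' - y) ^ (-(3:ℝ)/2))) • nB)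
        (MeasureTheory.volume.restrict Ω) :=
      hs3.aestronglyMeasurable.smul aestronglyMeasurable_const
    have ha : AEStronglyMeasurable
        (fun y : E3 => (3 * nq (x' - y) ^ (-(5:ℝ)/2)) • nB (x' - y))
        (MeasureTheory.volume.restrict Ω) :=
      hs5.aestronglyMeasurable.smul (measB x').aestronglyMeasurable
    have hL : Continuous (fun p : (E3 →L[ℝ] ℝ) × (E3 →L[ℝ] ℝ) =>
        (ContinuousLinearMap.smulRightL ℝ E3 (E3 →L[ℝ] ℝ)) p.1 p.2) :=
      (ContinuousLinearMap.smulRightL ℝ E3 (E3 →L[ℝ] ℝ)).continuous₂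
    have ht2 : AEStronglyMeasurable
        (fun y : E3 => ((3 * nq (x' - y) ^ (-(5:ℝ)/2)) • nB (x' - y)).smulRight (nB (x' - y)))
        (MeasureTheory.volume.restrict Ω) :=
      hL.comp_aestronglyMeasurable (ha.prodMk (measB x').aestronglyMeasurable)
    have h2 : AEStronglyMeasurable (fun y : E3 => nK2 (x' - y))
        (MeasureTheory.volume.restrict Ω) := by
      simp only [nK2]
      exact ht1.add ht2
    exact hρ.aestronglyMeasurable.smul h2
  -- bounds
  have bd0 : ∀ x' ∈ Metric.ball x (2*δ), ∀ y ∈ Ω,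
      ‖ρ y * nK0 (x' - y)‖ ≤ M * (2*δ)⁻¹ := by
    intro x' hx' y hy
    have hd := hdist x' hx' y hy
    rw [Real.norm_eq_abs, abs_mul, nK0_eq, abs_of_nonneg (inv_nonneg.mpr (norm_nonneg _))]
    exact mul_le_mul (hρbd y) (inv_anti₀ h2δ hd) (inv_nonneg.mpr (norm_nonneg _)) hM0
  have bd1 : ∀ x' ∈ Metric.ball x (2*δ), ∀ y ∈ Ω,
      ‖ρ y • nK1 (x' - y)‖ ≤ M * (2*δ) ^ (-2:ℝ) := by
    intro x' hx' y hy
    have hd := hdist x' hx' y hy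
    refine (ContinuousLinearMap.opNorm_smul_le (ρ y) (nK1 (x' - y))).trans ?_
    rw [Real.norm_eq_abs]
    exact mul_le_mul (hρbd y) (norm_nK1_le h2δ hd) (norm_nonneg _) hM0
  have bd2 : ∀ x' ∈ Metric.ball x (2*δ), ∀ y ∈ Ω,
      ‖ρ y • nK2 (x' - y)‖ ≤ M * (4 * (2*δ) ^ (-3:ℝ)) := by
    intro x' hx' y hy
    have hd := hdist x' hx' y hy
    refine (ContinuousLinearMap.opNorm_smul_le (ρ y) (nK2 (x' - y))).trans ?_
    rw [Real.norm_eq_abs]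
    exact mul_le_mul (hρbd y) (norm_nK2_le h2δ hd) (norm_nonneg _) hM0
  -- integrability
  have int0 : ∀ x' ∈ Metric.ball x (2*δ), Integrable (fun y => ρ y * nK0 (x' - y))
      (MeasureTheory.volume.restrict Ω) := fun x' hx' =>
    integrable_of_bound hΩm hfin (meas0 x') _ (bd0 x' hx')
  have int1 : ∀ x' ∈ Metric.ball x (2*δ), Integrable (fun y => ρ y • nK1 (x' - y))
      (MeasureTheory.volume.restrict Ω) := fun x' hx' =>
    integrable_of_bound hΩm hfin (meas1 x') _ (bd1 x' hx')
  have int2 : ∀ x' ∈ Metric.ball x (2*δ), Integrable (fun y => ρ y • nK2 (x' - y))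
      (MeasureTheory.volume.restrict Ω) := fun x' hx' =>
    integrable_of_bound hΩm hfin (meas2 x') _ (bd2 x' hx')
  -- first differentiation under the integral
  have key1 : ∀ x' ∈ Metric.ball x δ, HasFDerivAt (fun w => ∫ y in Ω, ρ y * nK0 (w - y))
      (∫ y in Ω, ρ y • nK1 (x' - y)) x' := by
    intro x' hx'
    refine hasFDerivAt_integral_of_dominated_of_fderiv_le
      (F' := fun w y => ρ y • nK1 (w - y)) (bound := fun _ => M * (2*δ) ^ (-2:ℝ)) (Metric.ball_mem_nhds x' hδ)
      (Filter.Eventually.of_forall fun w => meas0 w) (int0 x' (hballsub hx')) (meas1 x')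
      ?_ (integrableOn_const hfin.ne) ?_
    · refine (ae_restrict_iff' hΩm).mpr (Filter.Eventually.of_forall fun y hy w hw => ?_)
      exact bd1 w (hsubball x' hx' hw) y hy
    · refine (ae_restrict_iff' hΩm).mpr (Filter.Eventually.of_forall fun y hy w hw => ?_)
      have hz : w - y ≠ 0 := hne w (hsubball x' hx' hw) y hy
      have hsubd : HasFDerivAt (fun w : E3 => w - y) (ContinuousLinearMap.id ℝ E3) w :=
        (hasFDerivAt_id w).sub_const y
      have h0 := (hasFDerivAt_nK0 hz).comp w hsubd
      rw [ContinuousLinearMap.comp_id] at h0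
      exact h0.const_mul (ρ y)
  -- second differentiation under the integral
  have key2 : ∀ x' ∈ Metric.ball x δ, HasFDerivAt (fun w => ∫ y in Ω, ρ y • nK1 (w - y))
      (∫ y in Ω, ρ y • nK2 (x' - y)) x' := by
    intro x' hx'
    refine hasFDerivAt_integral_of_dominated_of_fderiv_le
      (F' := fun w y => ρ y • nK2 (w - y)) (bound := fun _ => M * (4 * (2*δ) ^ (-3:ℝ))) (Metric.ball_mem_nhds x' hδ)
      (Filter.Eventually.of_forall fun w => meas1 w) (int1 x' (hballsub hx')) (meas2 x')
      ?_ (integrableOn_const hfin.ne) ?_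
    · refine (ae_restrict_iff' hΩm).mpr (Filter.Eventually.of_forall fun y hy w hw => ?_)
      exact bd2 w (hsubball x' hx' hw) y hy
    · refine (ae_restrict_iff' hΩm).mpr (Filter.Eventually.of_forall fun y hy w hw => ?_)
      have hz : w - y ≠ 0 := hne w (hsubball x' hx' hw) y hy
      have hsubd : HasFDerivAt (fun w : E3 => w - y) (ContinuousLinearMap.id ℝ E3) w :=
        (hasFDerivAt_id w).sub_const y
      have h0 := (hasFDerivAt_nK1 hz).comp w hsubd
      rw [ContinuousLinearMap.comp_id] at h0
      exact h0.const_smul (ρ y)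
  -- continuity of the second derivative function
  have cont2 : ∀ x' ∈ Metric.ball x δ,
      ContinuousAt (fun w => ∫ y in Ω, ρ y • nK2 (w - y)) x' := by
    intro x' hx'
    refine MeasureTheory.continuousAt_of_dominated
      (bound := fun _ => M * (4 * (2*δ) ^ (-3:ℝ)))
      (Filter.Eventually.of_forall fun w => meas2 w) ?_
      (integrableOn_const hfin.ne) ?_
    · filter_upwards [Metric.isOpen_ball.eventually_mem (hballsub hx')] with w hw
      exact (ae_restrict_iff' hΩm).mpr
        (Filter.Eventually.of_forall fun y hy => bd2 w hw y hy)
    · refine (ae_restrict_iff' hΩm).mpr (Filter.Eventually.of_forall fun y hy => ?_)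
      have hz : x' - y ≠ 0 := hne x' (hballsub hx') y hy
      have hfc : ContinuousAt (fun w : E3 => w - y) x' :=
        (continuous_id.sub continuous_const).continuousAt
      have hc : ContinuousAt (fun w : E3 => nK2 (w - y)) x' :=
        ContinuousAt.comp (f := fun w : E3 => w - y) (x := x') (continuousAt_nK2 hz) hfc
      exact hc.const_smul (ρ y)
  -- rewrite N
  have hNN' : N = fun w => -(1 / (4 * π)) * ∫ y in Ω, ρ y * nK0 (w - y) := by
    rw [hN]
    funext w
    congr 1
    refine MeasureTheory.integral_congr_ae (Filter.Eventually.of_forall fun y => ?_)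
    show ρ y / ‖w - y‖ = ρ y * nK0 (w - y)
    rw [nK0_eq, div_eq_mul_inv]
  -- ContDiffAt
  have hN'2 : ContDiffAt ℝ 2 (fun w => ∫ y in Ω, ρ y * nK0 (w - y)) x := by
    rw [show (2 : WithTop ℕ∞) = ((1:ℕ) : WithTop ℕ∞) + 1 by norm_num]
    refine contDiffAt_succ_iff_hasFDerivAt.mpr
      ⟨fun w => ∫ y in Ω, ρ y • nK1 (w - y),
        ⟨Metric.ball x δ, Metric.ball_mem_nhds x hδ, key1⟩, ?_⟩
    rw [show ((1:ℕ) : WithTop ℕ∞) = ((0:ℕ) : WithTop ℕ∞) + 1 by norm_num]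
    refine contDiffAt_succ_iff_hasFDerivAt.mpr
      ⟨fun w => ∫ y in Ω, ρ y • nK2 (w - y),
        ⟨Metric.ball x δ, Metric.ball_mem_nhds x hδ, key2⟩, ?_⟩
    rw [show ((0:ℕ) : WithTop ℕ∞) = 0 by norm_num]
    exact contDiffAt_zero.mpr ⟨Metric.ball x δ, Metric.ball_mem_nhds x hδ,
      fun w hw => (cont2 w hw).continuousWithinAt⟩
  have hCD : ContDiffAt ℝ 2 N x := by
    rw [hNN']
    exact contDiffAt_const.mul hN'2
  refine ⟨hCD, ?_⟩
  -- Laplacian computation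
  have hxδ : x ∈ Metric.ball x δ := Metric.mem_ball_self hδ
  have hNder : ∀ w ∈ Metric.ball x δ, HasFDerivAt N
      ((-(1 / (4 * π))) • ∫ y in Ω, ρ y • nK1 (w - y)) w := by
    intro w hw
    rw [hNN']
    exact (key1 w hw).const_mul _
  have hGx : HasFDerivAt (fun w => ∫ y in Ω, ρ y • nK1 (w - y))
      (∫ y in Ω, ρ y • nK2 (x - y)) x := key2 x hxδ
  have int2x : Integrable (fun y => ρ y • nK2 (x - y)) (MeasureTheory.volume.restrict Ω) :=
    int2 x hxball
  have keyi : ∀ i : Fin 3,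
      fderiv ℝ (fun w => fderiv ℝ N w (EuclideanSpace.single i (1:ℝ))) x
        (EuclideanSpace.single i (1:ℝ))
      = -(1 / (4 * π)) *
        ((∫ y in Ω, ρ y • nK2 (x - y)) (EuclideanSpace.single i (1:ℝ))
          (EuclideanSpace.single i (1:ℝ))) := by
    intro i
    set e := EuclideanSpace.single i (1:ℝ) with he
    have happ : HasFDerivAt (fun w => (∫ y in Ω, ρ y • nK1 (w - y)) e)
        ((ContinuousLinearMap.apply ℝ ℝ e).comp (∫ y in Ω, ρ y • nK2 (x - y))) x :=
      (ContinuousLinearMap.apply ℝ ℝ e).hasFDerivAt.comp x hGx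
    have hmul : HasFDerivAt (fun w => -(1 / (4 * π)) * ((∫ y in Ω, ρ y • nK1 (w - y)) e))
        ((-(1 / (4 * π))) • ((ContinuousLinearMap.apply ℝ ℝ e).comp
          (∫ y in Ω, ρ y • nK2 (x - y)))) x := happ.const_mul _
    have heq : (fun w => fderiv ℝ N w e)
        =ᶠ[nhds x] fun w => -(1 / (4 * π)) * ((∫ y in Ω, ρ y • nK1 (w - y)) e) := by
      filter_upwards [Metric.ball_mem_nhds x hδ] with w hw
      rw [(hNder w hw).fderiv]
      simp
    rw [heq.fderiv_eq, hmul.fderiv]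
    simp
  simp only [lap]
  rw [Finset.sum_congr rfl (fun i _ => keyi i), ← Finset.mul_sum]
  have happly : ∀ i : Fin 3,
      ((∫ y in Ω, ρ y • nK2 (x - y)) (EuclideanSpace.single i (1:ℝ))
        (EuclideanSpace.single i (1:ℝ)))
      = ∫ y in Ω, (ρ y • nK2 (x - y)) (EuclideanSpace.single i (1:ℝ))
          (EuclideanSpace.single i (1:ℝ)) := by
    intro i
    rw [ContinuousLinearMap.integral_apply int2x,
      ContinuousLinearMap.integral_apply (int2x.apply_continuousLinearMap _)]
  rw [Finset.sum_congr rfl (fun i _ => happly i)]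
  rw [← MeasureTheory.integral_finset_sum Finset.univ
    (fun i _ => (int2x.apply_continuousLinearMap _).apply_continuousLinearMap _)]
  have hzero : ∀ y ∈ Ω, (∑ i : Fin 3, (ρ y • nK2 (x - y)) (EuclideanSpace.single i (1:ℝ))
      (EuclideanSpace.single i (1:ℝ))) = 0 := by
    intro y hy
    have hz : x - y ≠ 0 := hne x hxball y hy
    have hterm : ∀ i : Fin 3, (ρ y • nK2 (x - y)) (EuclideanSpace.single i (1:ℝ))
        (EuclideanSpace.single i (1:ℝ))
        = ρ y * (nK2 (x - y) (EuclideanSpace.single i (1:ℝ)) (EuclideanSpace.single i (1:ℝ))) := by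
      intro i; simp
    rw [Finset.sum_congr rfl (fun i _ => hterm i), ← Finset.mul_sum, nK2_trace hz, mul_zero]
  rw [MeasureTheory.setIntegral_congr_fun hΩm hzero]
  simp
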